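/- Let A_1,…,A_N ∈ GL_d(ℝ), let Q be a d×d real matrix, and let k be an integer with k ≤ rank Q such that (A_1,…,A_N) is k-irreducible. Let κ > 0 be any constant such that for every orthogonal projection B ∈ M_d(ℝ) of rank k there is a word 𝚔 with |𝚔| ≤ C(d,k) and σ_k(Q A_𝚔 B) ≥ κ. Then for every word 𝚒 there exists a word 𝚔 with |𝚔| ≤ C(d,k) such that σ_j(Q A_𝚔 A_𝚒) ≥ κ · σ_j(A_𝚒) for every j = 1,…,k. Here C(d,k) denotes the binomial coefficient d choose k. -/

import Mathlib

open scoped BigOperators Kronecker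

noncomputable section

namespace PaperProj

open Matrix

/-- The `j`-th singular value (`1`-indexed, in decreasing order) of a real square matrix:
the non-negative square roots of the eigenvalues of `AᵀA`, listed in decreasing order
with multiplicity. -/
noncomputable def sval {ι : Type*} [Fintype ι] [DecidableEq ι] (A : Matrix ι ι ℝ) (j : ℕ) : ℝ :=
  ((((Finset.univ.val.map fun i : ι =>
      Real.sqrt ((show (Aᵀ * A).IsHermitian by
        rw [← Matrix.conjTranspose_eq_transpose_of_trivial]
        exact Matrix.isHermitian_conjTranspose_mul_self A).eigenvalues i)).sort
    (· ≤ ·)).reverse).getD (j - 1) 0)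

/-- Falconer's singular value function `φ^s`. -/
noncomputable def svf {ι : Type*} [Fintype ι] [DecidableEq ι] (s : ℝ) (A : Matrix ι ι ℝ) : ℝ :=
  if s ≤ (Fintype.card ι : ℝ) then
    (∏ j ∈ Finset.Icc 1 ⌊s⌋₊, sval A j) * sval A ⌈s⌉₊ ^ (s - (⌊s⌋₊ : ℝ))
  else |A.det| ^ (s / (Fintype.card ι : ℝ))

/-- The product `A_{i_1} ⋯ A_{i_n}` associated to a word `i = i_1 ⋯ i_n`. -/
noncomputable def wordProd {ι : Type*} [Fintype ι] [DecidableEq ι] {N : ℕ}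
    (A : Fin N → Matrix ι ι ℝ) {n : ℕ} (i : Fin n → Fin N) : Matrix ι ι ℝ :=
  (List.ofFn fun j => A (i j)).prod

/-- The affinity dimension: `inf {s > 0 : ∑_{n≥1} ∑_{|i|=n} φ^s(A_i) < ∞}`. -/
noncomputable def affDim {ι : Type*} [Fintype ι] [DecidableEq ι] {N : ℕ}
    (A : Fin N → Matrix ι ι ℝ) : ℝ :=
  sInf {s : ℝ | 0 < s ∧
    Summable fun n : ℕ => ∑ i : Fin (n + 1) → Fin N, svf s (wordProd A i)}

/-- The pressure `P(A_1,…,A_N; s) = lim_n (1/n) log ∑_{|i|=n} φ^s(A_i)` (the limit exists by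
subadditivity, so it equals the limsup used here). -/
noncomputable def pressure {ι : Type*} [Fintype ι] [DecidableEq ι] {N : ℕ}
    (A : Fin N → Matrix ι ι ℝ) (s : ℝ) : ℝ :=
  Filter.limsup
    (fun n : ℕ => Real.log (∑ i : Fin n → Fin N, svf s (wordProd A i)) / n) Filter.atTop

/-- The tuple `(A_1,…,A_N)` is contracting with respect to some norm on `ℝ^d`. -/
def IsContractingTuple {ι : Type*} [Fintype ι] [DecidableEq ι] {N : ℕ}
    (A : Fin N → Matrix ι ι ℝ) : Prop :=
  ∃ (ν : Seminorm ℝ (ι → ℝ)) (c : ℝ), (∀ x : ι → ℝ, x ≠ 0 → 0 < ν x) ∧ c < 1 ∧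
    ∀ (i : Fin N) (x : ι → ℝ), ν ((A i).mulVec x) ≤ c * ν x

/-- Irreducibility: no nonzero proper subspace is preserved by every map of the tuple. -/
def IrreducibleTuple {N : ℕ} {V : Type*} [AddCommGroup V] [Module ℝ V]
    (f : Fin N → V →ₗ[ℝ] V) : Prop :=
  ∀ W : Submodule ℝ V, (∀ i, W.map (f i) ≤ W) → W = ⊥ ∨ W = ⊤

/-- Strong irreducibility: no finite union of nonzero proper subspaces is preserved by
every map of the tuple. -/
def StronglyIrreducibleTuple {N : ℕ} {V : Type*} [AddCommGroup V] [Module ℝ V]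
    (f : Fin N → V →ₗ[ℝ] V) : Prop :=
  ∀ (m : ℕ) (W : Fin (m + 1) → Submodule ℝ V), (∀ j, W j ≠ ⊥) → (∀ j, W j ≠ ⊤) →
    ¬ (∀ i, (f i) '' (⋃ j, (W j : Set V)) = ⋃ j, (W j : Set V))

/-- The linear map induced on the `k`-th exterior power by a linear endomorphism. -/
noncomputable def extPowMap {V : Type*} [AddCommGroup V] [Module ℝ V] (k : ℕ)
    (f : V →ₗ[ℝ] V) : ⋀[ℝ]^k V →ₗ[ℝ] ⋀[ℝ]^k V :=
  (ExteriorAlgebra.map f).toLinearMap.restrict (p := ⋀[ℝ]^k V) (q := ⋀[ℝ]^k V)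
    (by
      intro x hx
      have h : Submodule.map (ExteriorAlgebra.map f).toLinearMap (⋀[ℝ]^k V) ≤ ⋀[ℝ]^k V := by
        conv_lhs => rw [← ExteriorAlgebra.ιMulti_span_fixedDegree]
        rw [Submodule.map_span, Submodule.span_le]
        rintro y ⟨z, ⟨m, rfl⟩, rfl⟩
        rw [AlgHom.toLinearMap_apply, ExteriorAlgebra.map_apply_ιMulti]
        rw [← ExteriorAlgebra.ιMulti_span_fixedDegree]
        exact Submodule.subset_span ⟨_, rfl⟩
      exact h ⟨x, hx, rfl⟩)

instance extPowFree {V : Type*} [AddCommGroup V] [Module ℝ V] (k : ℕ) :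
    Module.Free ℝ (⋀[ℝ]^k V) := Module.Free.of_divisionRing ℝ _

instance extPowFinite {V : Type*} [AddCommGroup V] [Module ℝ V] [Module.Finite ℝ V] (k : ℕ) :
    Module.Finite ℝ (⋀[ℝ]^k V) := by
  rw [Module.Finite.iff_fg]
  refine Submodule.FG.pow ?_ k
  rw [← Submodule.map_top (ExteriorAlgebra.ι ℝ (M := V))]
  exact Submodule.FG.map _ Module.Finite.fg_top

/-- The tuple `(A_1,…,A_N)` is `k`-irreducible: the induced tuple on the `k`-th exterior
power is irreducible. -/
def kIrreducible {ι : Type*} [Fintype ι] [DecidableEq ι] {N : ℕ} (k : ℕ)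
    (A : Fin N → Matrix ι ι ℝ) : Prop :=
  IrreducibleTuple fun i => extPowMap k (Matrix.toLin' (A i))

/-- A linear endomorphism of a finite-dimensional real vector space is proximal if it has a
simple eigenvalue whose modulus strictly exceeds the modulus of every other (complex)
eigenvalue. -/
def ProximalEnd {V : Type*} [AddCommGroup V] [Module ℝ V] [Module.Finite ℝ V]
    [Module.Free ℝ V] (f : V →ₗ[ℝ] V) : Prop :=
  ∃ lam : ℂ, ((LinearMap.charpoly f).map (algebraMap ℝ ℂ)).roots.count lam = 1 ∧
    ∀ mu ∈ ((LinearMap.charpoly f).map (algebraMap ℝ ℂ)).roots, mu ≠ lam →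
      ‖mu‖ < ‖lam‖

/-- The tuple `(A_1,…,A_N)` is proximal of all orders: for each `k = 1,…,d`, some word
product of the induced tuple on the `k`-th exterior power is a proximal linear map. -/
def ProximalAllOrders {ι : Type*} [Fintype ι] [DecidableEq ι] {N : ℕ}
    (A : Fin N → Matrix ι ι ℝ) : Prop :=
  ∀ k : ℕ, 1 ≤ k → k ≤ Fintype.card ι →
    ∃ (n : ℕ) (i : Fin (n + 1) → Fin N),
      ProximalEnd (extPowMap k (Matrix.toLin' (wordProd A i)))

/-- The least number of open `δ`-balls needed to cover `Y` (when `Y` admits a finite cover;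
junk value `0` otherwise). -/
noncomputable def coverNum {E : Type*} [PseudoMetricSpace E] (Y : Set E) (δ : ℝ) : ℕ :=
  sInf {n : ℕ | ∃ t : Finset E, t.card = n ∧ Y ⊆ ⋃ x ∈ t, Metric.ball x δ}

/-- The upper box dimension `limsup_{δ→0⁺} log N(Y,δ) / log (1/δ)`. -/
noncomputable def upperBoxDim {E : Type*} [PseudoMetricSpace E] (Y : Set E) : ℝ :=
  Filter.limsup (fun δ : ℝ => Real.log (coverNum Y δ) / Real.log (1 / δ))
    (nhdsWithin 0 (Set.Ioi 0))

/-- The operator norm of a matrix with respect to the Euclidean norm. -/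
noncomputable def opNorm {ι : Type*} [Fintype ι] [DecidableEq ι] (A : Matrix ι ι ℝ) : ℝ :=
  ‖(Matrix.toEuclideanCLM (𝕜 := ℝ) A : EuclideanSpace ℝ ι →L[ℝ] EuclideanSpace ℝ ι)‖




section Statement5Aux

variable {d : ℕ}

variable {d : ℕ}

lemma sval_eigendata (A : Matrix (Fin d) (Fin d) ℝ) :
    ∃ (b : OrthonormalBasis (Fin d) ℝ (EuclideanSpace ℝ (Fin d))) (μ : Fin d → ℝ),
      (∀ i, toEuclideanLin (Aᵀ * A) (b i) = μ i • (b i)) ∧ (∀ i, 0 ≤ μ i) ∧ Antitone μ ∧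
      ∀ j : Fin d, sval A (j + 1) = Real.sqrt (μ j) := by
  set hH : (Aᵀ * A).IsHermitian := (by
    rw [← Matrix.conjTranspose_eq_transpose_of_trivial]
    exact Matrix.isHermitian_conjTranspose_mul_self A) with hHdef
  set ev : Fin d → ℝ := hH.eigenvalues with hev
  set g : Equiv.Perm (Fin d) := Tuple.sort ev with hg
  have hmono : Monotone (ev ∘ g) := Tuple.monotone_sort ev
  refine ⟨hH.eigenvectorBasis.reindex ((Fin.revPerm.trans g).symm), fun j => ev (g j.rev),
    ?_, ?_, ?_, ?_⟩
  · intro i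
    have := hH.mulVec_eigenvectorBasis (g i.rev)
    simp only [OrthonormalBasis.reindex_apply, Equiv.symm_symm, Equiv.trans_apply,
      Fin.revPerm_apply]
    ext x
    simpa using congrFun this x
  · intro i
    have hps : (Aᵀ * A).PosSemidef := by
      have := Matrix.posSemidef_conjTranspose_mul_self A
      simpa using this
    exact hps.eigenvalues_nonneg _
  · intro i j hij
    exact hmono (by simpa using Fin.rev_le_rev.mpr hij)
  · intro j
    have hlist : ((Finset.univ.val.map fun i : Fin d => Real.sqrt (ev i)).sort (· ≤ ·))
        = List.ofFn (fun i => Real.sqrt (ev (g i))) := by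
      refine List.Perm.eq_of_pairwise' (r := (· ≤ ·)) (Multiset.pairwise_sort _ _)
        ((List.sortedLE_ofFn_iff).2 (fun i j hij => Real.sqrt_le_sqrt (hmono hij))).pairwise ?_
      rw [← Multiset.coe_eq_coe, Multiset.sort_eq]
      have h1 := congr_arg Finset.val (Finset.map_univ_equiv g)
      rw [Finset.map_val, Equiv.coe_toEmbedding] at h1
      have h2 : (↑(List.ofFn fun i => Real.sqrt (ev (g i))) : Multiset ℝ)
          = Finset.univ.val.map (fun i : Fin d => Real.sqrt (ev (g i))) := by
        rw [List.ofFn_eq_map, Fin.univ_def]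
        rfl
      have h3 : Multiset.map (fun i : Fin d => Real.sqrt (ev (g i))) Finset.univ.val
          = Multiset.map (fun i : Fin d => Real.sqrt (ev i)) Finset.univ.val := by
        rw [show (fun i : Fin d => Real.sqrt (ev (g i)))
            = (fun i => Real.sqrt (ev i)) ∘ ⇑g from rfl, ← Multiset.map_map, h1]
      rw [h2, h3]
    have hlen : (((Finset.univ.val.map fun i : Fin d => Real.sqrt (ev i)).sort (· ≤ ·))).length = d := by
      rw [hlist, List.length_ofFn]
    have hjlt : (j : ℕ) < (((Finset.univ.val.map fun i : Fin d => Real.sqrt (ev i)).sort (· ≤ ·))).reverse.length := by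
      rw [List.length_reverse, hlen]; exact j.isLt
    show ((((Finset.univ.val.map fun i : Fin d => Real.sqrt (ev i)).sort (· ≤ ·))).reverse).getD ((j:ℕ) + 1 - 1) 0 = _
    rw [Nat.add_sub_cancel, hlist]
    rw [List.getD_eq_getElem _ _ (by simpa using j.isLt), List.getElem_reverse,
      List.getElem_ofFn]
    simp only [List.length_ofFn]
    have hidx : ∀ (h : d - 1 - (j:ℕ) < d), (⟨d - 1 - (j:ℕ), h⟩ : Fin d) = j.rev := by
      intro h; ext; simp only [Fin.val_rev]; omega
    rw [hidx]




lemma inner_eigen_sum (L : EuclideanSpace ℝ (Fin d) →ₗ[ℝ] EuclideanSpace ℝ (Fin d))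
    (b : OrthonormalBasis (Fin d) ℝ (EuclideanSpace ℝ (Fin d))) (μ : Fin d → ℝ)
    (hb : ∀ i, L (b i) = μ i • b i) (w : EuclideanSpace ℝ (Fin d)) :
    (inner ℝ w (L w) : ℝ) = ∑ i, μ i * (inner ℝ (b i) w : ℝ) ^ 2 := by
  have hw := b.sum_repr w
  have hLw : L w = ∑ i, (μ i * b.repr w i) • b i := by
    conv_lhs => rw [← hw]
    rw [map_sum]
    refine Finset.sum_congr rfl fun i _ => ?_
    rw [_root_.map_smul, hb i, smul_smul, mul_comm]
  rw [hLw, inner_sum]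
  refine Finset.sum_congr rfl fun i _ => ?_
  rw [real_inner_smul_right]
  have : (inner ℝ w (b i) : ℝ) = b.repr w i := by
    rw [real_inner_comm, ← OrthonormalBasis.repr_apply_apply]
  rw [this, ← OrthonormalBasis.repr_apply_apply]
  ring

lemma inner_toEuclideanLin_self (X : Matrix (Fin d) (Fin d) ℝ) (w : EuclideanSpace ℝ (Fin d)) :
    (inner ℝ (toEuclideanLin X w) (toEuclideanLin X w) : ℝ)
      = inner ℝ w (toEuclideanLin (Xᵀ * X) w) := by
  simp only [PiLp.inner_apply, RCLike.inner_apply, conj_trivial]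
  show (X *ᵥ w.ofLp) ⬝ᵥ (X *ᵥ w.ofLp) = ((Xᵀ * X) *ᵥ w.ofLp) ⬝ᵥ w.ofLp
  conv_rhs => rw [dotProduct_comm, ← Matrix.mulVec_mulVec, Matrix.dotProduct_mulVec, Matrix.vecMul_transpose]

lemma norm_sq_eigen (X : Matrix (Fin d) (Fin d) ℝ)
    (b : OrthonormalBasis (Fin d) ℝ (EuclideanSpace ℝ (Fin d))) (μ : Fin d → ℝ)
    (hb : ∀ i, toEuclideanLin (Xᵀ * X) (b i) = μ i • b i) (w : EuclideanSpace ℝ (Fin d)) :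
    ‖toEuclideanLin X w‖ ^ 2 = ∑ i, μ i * (inner ℝ (b i) w : ℝ) ^ 2 := by
  rw [← real_inner_self_eq_norm_sq, inner_toEuclideanLin_self X w,
    inner_eigen_sum (toEuclideanLin (Xᵀ * X)) b μ hb w]

lemma norm_sq_onb (b : OrthonormalBasis (Fin d) ℝ (EuclideanSpace ℝ (Fin d)))
    (w : EuclideanSpace ℝ (Fin d)) :
    ‖w‖ ^ 2 = ∑ i, (inner ℝ (b i) w : ℝ) ^ 2 := by
  have := inner_eigen_sum LinearMap.id b (fun _ => 1) (fun i => by simp) w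
  simp only [LinearMap.id_apply, one_mul] at this
  rw [← real_inner_self_eq_norm_sq, this]



lemma coeff_zero_of_mem_span (b : OrthonormalBasis (Fin d) ℝ (EuclideanSpace ℝ (Fin d)))
    (s : Set (Fin d)) {w : EuclideanSpace ℝ (Fin d)}
    (hw : w ∈ Submodule.span ℝ (b '' s)) {i : Fin d} (hi : i ∉ s) :
    (inner ℝ (b i) w : ℝ) = 0 := by
  have horth := orthonormal_iff_ite.mp b.orthonormal
  induction hw using Submodule.span_induction with
  | mem x hx =>
    obtain ⟨j, hj, rfl⟩ := hx
    rw [horth i j, if_neg]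
    rintro rfl; exact hi hj
  | zero => simp
  | add x y _ _ hx hy => rw [inner_add_right, hx, hy, add_zero]
  | smul a x _ hx => rw [real_inner_smul_right, hx, mul_zero]

lemma finrank_span_onb_image (b : OrthonormalBasis (Fin d) ℝ (EuclideanSpace ℝ (Fin d)))
    (s : Finset (Fin d)) :
    Module.finrank ℝ (Submodule.span ℝ (b '' ↑s)) = s.card := by
  have hli : LinearIndependent ℝ (fun x : ↥(↑s : Set (Fin d)) => b ↑x) :=
    b.orthonormal.linearIndependent.comp _ Subtype.val_injective
  have h := finrank_span_eq_card hli
  rw [← Set.image_eq_range] at h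
  rw [h]
  simp

lemma exists_nonzero_mem_inf (W₁ W₂ : Submodule ℝ (EuclideanSpace ℝ (Fin d)))
    (h : d < Module.finrank ℝ W₁ + Module.finrank ℝ W₂) :
    ∃ z, z ∈ W₁ ∧ z ∈ W₂ ∧ z ≠ 0 := by
  have h1 := Submodule.finrank_sup_add_finrank_inf_eq W₁ W₂
  have h2 : Module.finrank ℝ ↥(W₁ ⊔ W₂) ≤ d := by
    have := Submodule.finrank_le (W₁ ⊔ W₂)
    simpa [finrank_euclideanSpace] using this
  have h3 : 0 < Module.finrank ℝ ↥(W₁ ⊓ W₂) := by omega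
  have hne : W₁ ⊓ W₂ ≠ ⊥ := by
    intro hbot
    rw [hbot, finrank_bot] at h3
    exact lt_irrefl 0 h3
  obtain ⟨z, hz, hz0⟩ := Submodule.exists_mem_ne_zero_of_ne_bot hne
  exact ⟨z, hz.1, hz.2, hz0⟩


lemma sval_nonneg_rep (X : Matrix (Fin d) (Fin d) ℝ) (j : Fin d) : 0 ≤ sval X ((j : ℕ) + 1) := by
  obtain ⟨b, μ, hb, hμ0, hμa, hsv⟩ := sval_eigendata X
  rw [hsv j]; exact Real.sqrt_nonneg _

lemma sval_ge_of_subspace (X : Matrix (Fin d) (Fin d) ℝ) (j : Fin d)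
    (W : Submodule ℝ (EuclideanSpace ℝ (Fin d))) (hW : (j : ℕ) + 1 ≤ Module.finrank ℝ W)
    (c : ℝ) (hcW : ∀ w ∈ W, c * ‖w‖ ≤ ‖toEuclideanLin X w‖) :
    c ≤ sval X ((j : ℕ) + 1) := by
  obtain ⟨b, μ, hb, hμ0, hμa, hsv⟩ := sval_eigendata X
  rcases lt_or_ge c 0 with hc | hc
  · exact le_trans hc.le (Real.sqrt_nonneg _) |>.trans_eq (hsv j).symm |>.trans_eq rfl
  rw [hsv j]
  set S := Submodule.span ℝ (b '' ↑(Finset.Ici j)) with hS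
  have hrk : Module.finrank ℝ S = d - (j : ℕ) := by
    rw [hS, finrank_span_onb_image, Fin.card_Ici]
  obtain ⟨z, hzW, hzS, hz0⟩ := exists_nonzero_mem_inf W S (by
    have := j.isLt; omega)
  have hzn : 0 < ‖z‖ := norm_pos_iff.mpr hz0
  have hz2 : 0 < ‖z‖ ^ 2 := pow_pos hzn 2
  have hup : ‖toEuclideanLin X z‖ ^ 2 ≤ μ j * ‖z‖ ^ 2 := by
    rw [norm_sq_eigen X b μ hb z, norm_sq_onb b z, Finset.mul_sum]
    refine Finset.sum_le_sum fun i _ => ?_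
    by_cases hi : i ∈ Finset.Ici j
    · have : μ i ≤ μ j := hμa (Finset.mem_Ici.mp hi)
      nlinarith [sq_nonneg (inner ℝ (b i) z : ℝ)]
    · rw [coeff_zero_of_mem_span b _ hzS (by simpa using hi)]
      simp
  have hlow : (c * ‖z‖) ^ 2 ≤ ‖toEuclideanLin X z‖ ^ 2 := by
    have h1 := hcW z hzW
    have h2 : 0 ≤ ‖toEuclideanLin X z‖ := norm_nonneg _
    have h3 : 0 ≤ c * ‖z‖ := mul_nonneg hc (norm_nonneg _)
    nlinarith
  apply Real.le_sqrt_of_sq_le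
  have : c ^ 2 * ‖z‖ ^ 2 ≤ μ j * ‖z‖ ^ 2 := by nlinarith
  exact le_of_mul_le_mul_right (by linarith) hz2

lemma sval_le_of_subspace (X : Matrix (Fin d) (Fin d) ℝ) (j : Fin d)
    (W : Submodule ℝ (EuclideanSpace ℝ (Fin d))) (hW : d - (j : ℕ) ≤ Module.finrank ℝ W)
    (c : ℝ) (hc : 0 ≤ c) (hcW : ∀ w ∈ W, ‖toEuclideanLin X w‖ ≤ c * ‖w‖) :
    sval X ((j : ℕ) + 1) ≤ c := by
  obtain ⟨b, μ, hb, hμ0, hμa, hsv⟩ := sval_eigendata X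
  rw [hsv j]
  set S := Submodule.span ℝ (b '' ↑(Finset.Iic j)) with hS
  have hrk : Module.finrank ℝ S = (j : ℕ) + 1 := by
    rw [hS, finrank_span_onb_image, Fin.card_Iic]
  obtain ⟨z, hzW, hzS, hz0⟩ := exists_nonzero_mem_inf W S (by
    have := j.isLt; omega)
  have hzn : 0 < ‖z‖ := norm_pos_iff.mpr hz0
  have hz2 : 0 < ‖z‖ ^ 2 := pow_pos hzn 2
  have hlow : μ j * ‖z‖ ^ 2 ≤ ‖toEuclideanLin X z‖ ^ 2 := by
    rw [norm_sq_eigen X b μ hb z, norm_sq_onb b z, Finset.mul_sum]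
    refine Finset.sum_le_sum fun i _ => ?_
    by_cases hi : i ∈ Finset.Iic j
    · have : μ j ≤ μ i := hμa (Finset.mem_Iic.mp hi)
      nlinarith [sq_nonneg (inner ℝ (b i) z : ℝ)]
    · rw [coeff_zero_of_mem_span b _ hzS (by simpa using hi)]
      simp
  have hup : ‖toEuclideanLin X z‖ ^ 2 ≤ (c * ‖z‖) ^ 2 := by
    have h1 := hcW z hzW
    have h2 : 0 ≤ ‖toEuclideanLin X z‖ := norm_nonneg _
    nlinarith
  have hμc : μ j ≤ c ^ 2 := by
    have : μ j * ‖z‖ ^ 2 ≤ c ^ 2 * ‖z‖ ^ 2 := by nlinarith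
    exact le_of_mul_le_mul_right (by linarith) hz2
  calc Real.sqrt (μ j) ≤ Real.sqrt (c ^ 2) := Real.sqrt_le_sqrt hμc
    _ = c := by rw [Real.sqrt_sq hc]


lemma toEuclideanLin_mulVec (A : Matrix (Fin d) (Fin d) ℝ) (x : EuclideanSpace ℝ (Fin d)) :
    toEuclideanLin A x = A *ᵥ x := rfl

lemma toEuclideanLin_mul (A B : Matrix (Fin d) (Fin d) ℝ) (x : EuclideanSpace ℝ (Fin d)) :
    toEuclideanLin (A * B) x = toEuclideanLin A (toEuclideanLin B x) := by
  simp [Matrix.toLpLin_apply, Matrix.mulVec_mulVec]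

def projMatrix (U : Submodule ℝ (EuclideanSpace ℝ (Fin d))) : Matrix (Fin d) (Fin d) ℝ :=
  toEuclideanLin.symm (U.subtype ∘ₗ U.orthogonalProjectionOnto.toLinearMap)

lemma projMatrix_apply (U : Submodule ℝ (EuclideanSpace ℝ (Fin d)))
    (x : EuclideanSpace ℝ (Fin d)) :
    toEuclideanLin (projMatrix U) x = U.orthogonalProjectionOnto x := by
  simp [projMatrix]

lemma projMatrix_apply_mem (U : Submodule ℝ (EuclideanSpace ℝ (Fin d)))
    {x : EuclideanSpace ℝ (Fin d)} (hx : x ∈ U) :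
    toEuclideanLin (projMatrix U) x = x := by
  rw [projMatrix_apply]
  exact Submodule.starProjection_eq_self_iff.mpr hx

lemma projMatrix_apply_orth (U : Submodule ℝ (EuclideanSpace ℝ (Fin d)))
    {x : EuclideanSpace ℝ (Fin d)} (hx : x ∈ Uᗮ) :
    toEuclideanLin (projMatrix U) x = 0 := by
  rw [projMatrix_apply, Submodule.orthogonalProjectionOnto_apply_of_mem_orthogonal hx]
  simp

lemma projMatrix_mem_range (U : Submodule ℝ (EuclideanSpace ℝ (Fin d)))
    (x : EuclideanSpace ℝ (Fin d)) : toEuclideanLin (projMatrix U) x ∈ U := by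
  rw [projMatrix_apply]; exact (U.orthogonalProjectionOnto x).2

lemma projMatrix_idem (U : Submodule ℝ (EuclideanSpace ℝ (Fin d))) :
    projMatrix U * projMatrix U = projMatrix U := by
  apply toEuclideanLin.injective
  ext1 x
  rw [toEuclideanLin_mul]
  rw [projMatrix_apply_mem U (projMatrix_mem_range U x)]

lemma projMatrix_symm (U : Submodule ℝ (EuclideanSpace ℝ (Fin d))) :
    (projMatrix U)ᵀ = projMatrix U := by
  rw [← conjTranspose_eq_transpose_of_trivial]
  have : (projMatrix U).IsHermitian := by
    rw [isHermitian_iff_isSymmetric]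
    have h := U.starProjection_isSymmetric
    have he : ((projMatrix U).toEuclideanLin : _) = (U.subtypeL ∘L U.orthogonalProjectionOnto : _) := by
      apply LinearMap.ext; intro x
      rw [projMatrix_apply]; rfl
    rw [he]
    exact h
  exact this

lemma projMatrix_rank (U : Submodule ℝ (EuclideanSpace ℝ (Fin d))) :
    (projMatrix U).rank = Module.finrank ℝ U := by
  rw [Matrix.rank_eq_finrank_range_toLin (projMatrix U) (PiLp.basisFun 2 ℝ (Fin d))
    (PiLp.basisFun 2 ℝ (Fin d))]
  have : Matrix.toLin (PiLp.basisFun 2 ℝ (Fin d)) (PiLp.basisFun 2 ℝ (Fin d)) (projMatrix U)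
      = U.subtype ∘ₗ U.orthogonalProjectionOnto.toLinearMap := by
    rw [← toEuclideanLin_eq_toLin]
    simp [projMatrix]
  rw [this, LinearMap.range_comp]
  have hsurj : LinearMap.range (U.orthogonalProjectionOnto.toLinearMap
      : EuclideanSpace ℝ (Fin d) →ₗ[ℝ] U) = ⊤ := by
    rw [LinearMap.range_eq_top]
    intro u
    exact ⟨(u : EuclideanSpace ℝ (Fin d)), Submodule.orthogonalProjectionOnto_mem_subspace_eq_self u⟩
  rw [hsurj, Submodule.map_subtype_top]



lemma norm_ge_on_top_span (X : Matrix (Fin d) (Fin d) ℝ)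
    (b : OrthonormalBasis (Fin d) ℝ (EuclideanSpace ℝ (Fin d))) (μ : Fin d → ℝ)
    (hb : ∀ i, toEuclideanLin (Xᵀ * X) (b i) = μ i • b i) (hμ0 : ∀ i, 0 ≤ μ i)
    (hμa : Antitone μ) (t : Fin d) {w : EuclideanSpace ℝ (Fin d)}
    (hw : w ∈ Submodule.span ℝ (b '' ↑(Finset.Iic t))) :
    Real.sqrt (μ t) * ‖w‖ ≤ ‖toEuclideanLin X w‖ := by
  have hlow : μ t * ‖w‖ ^ 2 ≤ ‖toEuclideanLin X w‖ ^ 2 := by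
    rw [norm_sq_eigen X b μ hb w, norm_sq_onb b w, Finset.mul_sum]
    refine Finset.sum_le_sum fun i _ => ?_
    by_cases hi : i ∈ Finset.Iic t
    · have : μ t ≤ μ i := hμa (Finset.mem_Iic.mp hi)
      nlinarith [sq_nonneg (inner ℝ (b i) w : ℝ)]
    · rw [coeff_zero_of_mem_span b _ hw (by simpa using hi)]
      simp
  have h1 : Real.sqrt (μ t * ‖w‖ ^ 2) ≤ Real.sqrt (‖toEuclideanLin X w‖ ^ 2) :=
    Real.sqrt_le_sqrt hlow
  rw [Real.sqrt_mul (hμ0 t), Real.sqrt_sq (norm_nonneg _), Real.sqrt_sq (norm_nonneg _)] at h1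
  exact h1

end Statement5Aux

/-- second half of the proof of Lemma 4. Suppose `κ > 0` is such that for
every rank-`k` orthogonal projection `B` there is a word `kk` of length at most `d.choose k`
with `σ_k(Q A_kk B) ≥ κ`. Then for every word `i` there is a word `kk` of length at most
`d.choose k` such that `σ_j(Q A_kk A_i) ≥ κ σ_j(A_i)` for every `j = 1,…,k`. -/
theorem statement5 {d N : ℕ} (A : Fin N → Matrix (Fin d) (Fin d) ℝ)
    (hInv : ∀ i, IsUnit (A i)) (Q : Matrix (Fin d) (Fin d) ℝ) (k : ℕ)
    (hk0 : 1 ≤ k) (hk2 : k ≤ Q.rank) (hkirr : kIrreducible k A)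
    (κ : ℝ) (hκ : 0 < κ)
    (hbound : ∀ B : Matrix (Fin d) (Fin d) ℝ, B * B = B → Bᵀ = B → B.rank = k →
      ∃ (m : ℕ) (kk : Fin m → Fin N), m ≤ Nat.choose d k ∧
        κ ≤ sval (Q * wordProd A kk * B) k) :
    ∀ (n : ℕ) (i : Fin n → Fin N),
      ∃ (m : ℕ) (kk : Fin m → Fin N), m ≤ Nat.choose d k ∧
        ∀ j : ℕ, 1 ≤ j → j ≤ k →
          κ * sval (wordProd A i) j ≤ sval (Q * wordProd A kk * wordProd A i) j := by
  have hkd : k ≤ d := hk2.trans (by simpa using Q.rank_le_card_width)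
  intro n i
  set T := wordProd A i with hT
  have hTu : IsUnit T := by
    apply List.prod_isUnit
    intro m hm
    rw [List.mem_ofFn] at hm
    obtain ⟨j, rfl⟩ := hm
    exact hInv _
  obtain ⟨Tu, hTu'⟩ := hTu
  have hTT' : T * (↑Tu⁻¹ : Matrix (Fin d) (Fin d) ℝ) = 1 := by
    rw [← hTu']; exact_mod_cast Tu.mul_inv
  have hT'T : (↑Tu⁻¹ : Matrix (Fin d) (Fin d) ℝ) * T = 1 := by
    rw [← hTu']; exact_mod_cast Tu.inv_mul
  set e : EuclideanSpace ℝ (Fin d) ≃ₗ[ℝ] EuclideanSpace ℝ (Fin d) :=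
    LinearEquiv.ofLinear (toEuclideanLin T) (toEuclideanLin (↑Tu⁻¹))
      (by
        ext1 x
        rw [LinearMap.comp_apply, LinearMap.id_apply, ← toEuclideanLin_mul, hTT',
          Matrix.toLpLin_one, LinearMap.id_apply])
      (by
        ext1 x
        rw [LinearMap.comp_apply, LinearMap.id_apply, ← toEuclideanLin_mul, hT'T,
          Matrix.toLpLin_one, LinearMap.id_apply]) with he
  obtain ⟨b, μ, hb, hμ0, hμa, hsv⟩ := sval_eigendata T
  have hk1d : k - 1 < d := by omega
  set k1 : Fin d := ⟨k - 1, hk1d⟩ with hk1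
  have hk1k : (k1 : ℕ) + 1 = k := by simp only [hk1]; omega
  set U : Submodule ℝ (EuclideanSpace ℝ (Fin d)) :=
    (Submodule.span ℝ (b '' ↑(Finset.Iic k1))).map (e : _ →ₗ[ℝ] _) with hU
  have hUrk : Module.finrank ℝ U = k := by
    rw [hU, LinearEquiv.finrank_map_eq, finrank_span_onb_image, Fin.card_Iic, hk1k]
  obtain ⟨m, kk, hm, hκs⟩ := hbound (projMatrix U) (projMatrix_idem U) (projMatrix_symm U)
    (by rw [projMatrix_rank, hUrk])
  refine ⟨m, kk, hm, ?_⟩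
  set M := Q * wordProd A kk with hM
  have hminU : ∀ x ∈ U, κ * ‖x‖ ≤ ‖toEuclideanLin M x‖ := by
    intro x hx
    rcases eq_or_ne x 0 with rfl | hx0
    · simp
    have hxn : 0 < ‖x‖ := norm_pos_iff.mpr hx0
    have hineq : sval (M * projMatrix U) ((k1 : ℕ) + 1) ≤ ‖toEuclideanLin M x‖ / ‖x‖ := by
      apply sval_le_of_subspace _ k1 ((ℝ ∙ x) ⊔ Uᗮ)
      · have hinf : (ℝ ∙ x) ⊓ Uᗮ = ⊥ := by
          rw [Submodule.eq_bot_iff]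
          rintro z ⟨hz1, hz2⟩
          obtain ⟨c, rfl⟩ := Submodule.mem_span_singleton.mp hz1
          rcases eq_or_ne c 0 with rfl | hc0
          · simp
          exfalso
          have hxU' : x ∈ Uᗮ := by
            have h5 := Uᗮ.smul_mem c⁻¹ hz2
            rwa [smul_smul, inv_mul_cancel₀ hc0, one_smul] at h5
          have h6 : (inner ℝ x x : ℝ) = 0 := (Submodule.mem_orthogonal U x).mp hxU' x hx
          rw [inner_self_eq_zero] at h6
          exact hx0 h6
        have h7 := Submodule.finrank_sup_add_finrank_inf_eq (ℝ ∙ x) Uᗮ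
        rw [hinf, finrank_bot, finrank_span_singleton hx0] at h7
        have h8 := U.finrank_add_finrank_orthogonal
        rw [hUrk] at h8
        have h9 : Module.finrank ℝ (EuclideanSpace ℝ (Fin d)) = d := by
          simp [finrank_euclideanSpace]
        rw [h9] at h8
        simp only [hk1]
        omega
      · exact div_nonneg (norm_nonneg _) (norm_nonneg _)
      · intro w hw
        obtain ⟨u, hu, v, hv, rfl⟩ := Submodule.mem_sup.mp hw
        obtain ⟨c, rfl⟩ := Submodule.mem_span_singleton.mp hu
        have hcxU : c • x ∈ U := U.smul_mem c hx
        have hBw : toEuclideanLin (projMatrix U) (c • x + v) = c • x := by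
          rw [map_add, projMatrix_apply_mem U hcxU, projMatrix_apply_orth U hv, add_zero]
        rw [toEuclideanLin_mul, hBw]
        have horth : (inner ℝ (c • x) v : ℝ) = 0 :=
          (Submodule.mem_orthogonal U v).mp hv (c • x) hcxU
        have hno : ‖c • x‖ ≤ ‖c • x + v‖ := by
          have hsq := norm_add_sq_real (c • x) v
          rw [horth] at hsq
          have h2 : ‖c • x‖ ^ 2 ≤ ‖c • x + v‖ ^ 2 := by nlinarith [sq_nonneg ‖v‖]
          have h3 := Real.sqrt_le_sqrt h2
          rwa [Real.sqrt_sq (norm_nonneg _), Real.sqrt_sq (norm_nonneg _)] at h3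
        calc ‖toEuclideanLin M (c • x)‖
            = (‖toEuclideanLin M x‖ / ‖x‖) * ‖c • x‖ := by
              rw [_root_.map_smul, norm_smul, norm_smul, Real.norm_eq_abs]
              field_simp
          _ ≤ (‖toEuclideanLin M x‖ / ‖x‖) * ‖c • x + v‖ :=
              mul_le_mul_of_nonneg_left hno (div_nonneg (norm_nonneg _) (norm_nonneg _))
    rw [hk1k] at hineq
    have h10 : κ ≤ ‖toEuclideanLin M x‖ / ‖x‖ := le_trans hκs hineq
    calc κ * ‖x‖ ≤ (‖toEuclideanLin M x‖ / ‖x‖) * ‖x‖ :=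
          mul_le_mul_of_nonneg_right h10 (norm_nonneg _)
      _ = ‖toEuclideanLin M x‖ := by field_simp
  intro j hj1 hjk
  have hjd : j - 1 < d := by omega
  set j1 : Fin d := ⟨j - 1, hjd⟩ with hj1'
  have hj1k : (j1 : ℕ) + 1 = j := by simp only [hj1']; omega
  have hsvj : sval T j = Real.sqrt (μ j1) := by rw [← hj1k]; exact hsv j1
  rw [← hj1k]
  apply sval_ge_of_subspace (M * T) j1 (Submodule.span ℝ (b '' ↑(Finset.Iic j1)))
  · rw [finrank_span_onb_image, Fin.card_Iic]
  · intro w hw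
    have hsub : w ∈ Submodule.span ℝ (b '' ↑(Finset.Iic k1)) := by
      refine Submodule.span_mono (Set.image_mono ?_) hw
      intro a ha
      simp only [Finset.coe_Iic, Set.mem_Iic] at ha ⊢
      exact le_trans ha (by simp only [hj1', hk1, Fin.mk_le_mk]; omega)
    have hwU : toEuclideanLin T w ∈ U := by
      rw [hU]
      exact Submodule.mem_map_of_mem hsub
    have h2 : Real.sqrt (μ j1) * ‖w‖ ≤ ‖toEuclideanLin T w‖ :=
      norm_ge_on_top_span T b μ hb hμ0 hμa j1 hw
    have h3 := hminU _ hwU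
    rw [toEuclideanLin_mul]
    calc κ * sval T ((j1 : ℕ) + 1) * ‖w‖ = κ * (Real.sqrt (μ j1) * ‖w‖) := by
          rw [hj1k, hsvj]; ring
      _ ≤ κ * ‖toEuclideanLin T w‖ := mul_le_mul_of_nonneg_left h2 hκ.le
      _ ≤ ‖toEuclideanLin M (toEuclideanLin T w)‖ := h3

end PaperProj
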